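/- Let X ∈ ℝ^{n×r} with n ≤ r and suppose the rows of X are pairwise orthogonal with equal nonzero norm. Then XᵀX has exactly n equal nonzero eigenvalues, and for any p < n, the optimal value min_{WᵀW=I_p} ‖X − X W Wᵀ‖_F² equals (1 − p/n)‖X‖_F², i.e., no p-dimensional basis can reduce the relative reconstruction error below 1 − p/n. -/

import Mathlib

open Matrix BigOperators

/-- Squared Frobenius norm of a real matrix. -/
noncomputable def frobSq {n r : ℕ} (M : Matrix (Fin n) (Fin r) ℝ) : ℝ :=
  ∑ i, ∑ j, (M i j) ^ 2

lemma frobSq_eq_trace {n r : ℕ} (M : Matrix (Fin n) (Fin r) ℝ) :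
    frobSq M = (M * Mᵀ).trace := by
  simp [frobSq, Matrix.trace, Matrix.mul_apply, Matrix.diag, sq]

lemma sum_eig {r : ℕ} (A : Matrix (Fin r) (Fin r) ℝ) (hA : A.IsHermitian) :
    ∑ i, hA.eigenvalues i = A.trace := by
  rw [hA.trace_eq_sum_eigenvalues]
  simp

lemma dot_self_mulVec {s r : ℕ} (A : Matrix (Fin s) (Fin r) ℝ) (w : Fin r → ℝ) :
    (A *ᵥ w) ⬝ᵥ (A *ᵥ w) = w ⬝ᵥ ((Aᵀ * A) *ᵥ w) := by
  symm
  rw [← Matrix.mulVec_mulVec, Matrix.dotProduct_mulVec, Matrix.vecMul_transpose]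

/-- Worst case for RMM: if the rows of `X ∈ ℝ^{n×r}` (with `n ≤ r`) are
pairwise orthogonal with equal nonzero norm, then `XᵀX` has exactly `n` equal
nonzero eigenvalues (all other eigenvalues being zero), and for `p < n` the
optimal value `min_{WᵀW = I_p} ‖X − X W Wᵀ‖_F²` equals `(1 − p/n)‖X‖_F²`. -/
theorem rmm_orthogonal_rows_worst_case {n r p : ℕ} (hnr : n ≤ r) (hp : p < n)
    (X : Matrix (Fin n) (Fin r) ℝ) (hS : (Xᵀ * X).IsHermitian)
    (horth : ∀ i i' : Fin n, i ≠ i' → (∑ t, X i t * X i' t) = 0)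
    (hnorm : ∀ i i' : Fin n, (∑ t, (X i t) ^ 2) = ∑ t, (X i' t) ^ 2)
    (hnz : ∀ i : Fin n, (∑ t, (X i t) ^ 2) ≠ 0) :
    (∃ c : ℝ, c ≠ 0 ∧
      (Finset.univ.filter fun i : Fin r => hS.eigenvalues i = c).card = n ∧
      ∀ i : Fin r, hS.eigenvalues i = c ∨ hS.eigenvalues i = 0) ∧
    IsLeast {e : ℝ | ∃ W : Matrix (Fin r) (Fin p) ℝ,
        Wᵀ * W = 1 ∧ e = frobSq (X - X * W * Wᵀ)}
      ((1 - (p : ℝ) / n) * frobSq X) := by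
  have hnpos : 0 < n := lt_of_le_of_lt (Nat.zero_le p) hp
  set i0 : Fin n := ⟨0, hnpos⟩
  set c : ℝ := ∑ t, (X i0 t) ^ 2 with hc_def
  have hrow : ∀ i : Fin n, (∑ t, (X i t) ^ 2) = c := fun i => hnorm i i0
  have hc0 : c ≠ 0 := hnz i0
  have hcpos : 0 < c := by
    rcases (Finset.sum_nonneg (fun t _ => sq_nonneg (X i0 t))).lt_or_eq with h | h
    · exact h
    · exact absurd h.symm hc0
  -- X * Xᵀ = c • 1
  have hXXt : X * Xᵀ = c • (1 : Matrix (Fin n) (Fin n) ℝ) := by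
    ext i i'
    by_cases h : i = i'
    · subst h
      simp [Matrix.mul_apply, Matrix.one_apply, ← sq, hrow i]
    · simp [Matrix.mul_apply, Matrix.one_apply, h, horth i i' h]
  set S : Matrix (Fin r) (Fin r) ℝ := Xᵀ * X with hS_def
  have hS2 : S * S = c • S := by
    rw [hS_def]
    calc Xᵀ * X * (Xᵀ * X) = Xᵀ * (X * Xᵀ) * X := by
          rw [Matrix.mul_assoc, Matrix.mul_assoc, Matrix.mul_assoc]
      _ = c • (Xᵀ * X) := by
          rw [hXXt]; simp [Matrix.mul_smul, Matrix.smul_mul, Matrix.mul_assoc]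
  have hSsymm : Sᵀ = S := hS
  -- trace of S
  have htrS : S.trace = n * c := by
    have : S.trace = ∑ i : Fin n, ∑ j : Fin r, (X i j) ^ 2 := by
      rw [Matrix.trace]
      simp only [Matrix.diag, hS_def, Matrix.mul_apply, Matrix.transpose_apply, ← sq]
      rw [Finset.sum_comm]
    rw [this]
    simp [hrow, Finset.sum_const, mul_comm]
  -- each eigenvalue is c or 0
  have heig : ∀ i : Fin r, hS.eigenvalues i = c ∨ hS.eigenvalues i = 0 := by
    intro i
    set lam := hS.eigenvalues i with hlam
    have hv := hS.mulVec_eigenvectorBasis i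
    have hvne : (⇑(hS.eigenvectorBasis i) : Fin r → ℝ) ≠ 0 := by
      intro h
      exact hS.eigenvectorBasis.orthonormal.ne_zero i (by ext t; exact congrFun h t)
    have h2 : (S * S) *ᵥ ⇑(hS.eigenvectorBasis i) = (lam * lam) • ⇑(hS.eigenvectorBasis i) := by
      rw [← Matrix.mulVec_mulVec, hv, Matrix.mulVec_smul, hv, smul_smul]
    rw [hS2, Matrix.smul_mulVec, hv, smul_smul] at h2
    have : (lam * lam - c * lam) • (⇑(hS.eigenvectorBasis i) : Fin r → ℝ) = 0 := by
      rw [sub_smul, h2, sub_self]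
    rcases smul_eq_zero.mp this with h | h
    · have : lam * (lam - c) = 0 := by ring_nf; ring_nf at h; linarith
      rcases mul_eq_zero.mp this with h' | h'
      · exact Or.inr h'
      · exact Or.inl (by linarith)
    · exact absurd h hvne
  -- count
  have hsum := sum_eig S hS
  have hcard : (Finset.univ.filter fun i : Fin r => hS.eigenvalues i = c).card = n := by
    have hsplit : ∑ i, hS.eigenvalues i =
        ((Finset.univ.filter fun i : Fin r => hS.eigenvalues i = c).card : ℝ) * c := by
      rw [← Finset.sum_filter_add_sum_filter_not Finset.univ
        (fun i : Fin r => hS.eigenvalues i = c)]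
      have h1 : ∑ i ∈ Finset.univ.filter (fun i : Fin r => hS.eigenvalues i = c),
          hS.eigenvalues i =
          ((Finset.univ.filter fun i : Fin r => hS.eigenvalues i = c).card : ℝ) * c := by
        rw [Finset.sum_congr rfl (fun i hi => (Finset.mem_filter.mp hi).2)]
        simp [mul_comm]
      have h2 : ∑ i ∈ Finset.univ.filter (fun i : Fin r => ¬ hS.eigenvalues i = c),
          hS.eigenvalues i = 0 := by
        apply Finset.sum_eq_zero
        intro i hi
        rcases heig i with h | h
        · exact absurd h (Finset.mem_filter.mp hi).2
        · exact h
      rw [h1, h2, add_zero]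
    rw [hsplit, htrS] at hsum
    have := mul_right_cancel₀ hc0 hsum
    exact_mod_cast this
  constructor
  · exact ⟨c, hc0, hcard, heig⟩
  -- frobSq X = n * c
  have hfX : frobSq X = n * c := by
    rw [frobSq_eq_trace, hXXt]
    simp [Matrix.trace_smul, mul_comm]
  have hval : (1 - (p : ℝ) / n) * frobSq X = n * c - p * c := by
    rw [hfX]
    field_simp
  -- general formula: frobSq (X - X*W*Wᵀ) = n*c - frobSq (X*W)  when WᵀW = 1
  have hformula : ∀ W : Matrix (Fin r) (Fin p) ℝ, Wᵀ * W = 1 →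
      frobSq (X - X * W * Wᵀ) = n * c - frobSq (X * W) := by
    intro W hW
    have habs : ∀ (M : Matrix (Fin p) (Fin n) ℝ), Wᵀ * (W * M) = M := fun M => by
      rw [← Matrix.mul_assoc, hW, Matrix.one_mul]
    have hEEt : (X - X * W * Wᵀ) * (X - X * W * Wᵀ)ᵀ
        = X * Xᵀ - X * (W * (Wᵀ * Xᵀ)) := by
      rw [Matrix.transpose_sub, Matrix.sub_mul, Matrix.mul_sub, Matrix.mul_sub]
      simp only [Matrix.transpose_mul, Matrix.transpose_transpose, Matrix.mul_assoc]
      simp only [habs]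
      abel
    have hfXW : frobSq (X * W) = (X * (W * (Wᵀ * Xᵀ))).trace := by
      rw [frobSq_eq_trace]
      simp only [Matrix.transpose_mul, Matrix.mul_assoc]
    rw [frobSq_eq_trace, hEEt, Matrix.trace_sub, ← hfXW, hXXt]
    simp [Matrix.trace_smul, mul_comm]
  -- key inequality : wᵀ S w ≤ c * (w ⬝ w)
  have hkey : ∀ w : Fin r → ℝ, w ⬝ᵥ (S *ᵥ w) ≤ c * (w ⬝ᵥ w) := by
    intro w
    set u : Fin r → ℝ := c • w - S *ᵥ w with hu
    have huu : 0 ≤ u ⬝ᵥ u := by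
      simp only [dotProduct, Fintype.sum_prod_type]
      exact Finset.sum_nonneg fun t _ => mul_self_nonneg _
    have hSwSw : (S *ᵥ w) ⬝ᵥ (S *ᵥ w) = c * (w ⬝ᵥ (S *ᵥ w)) := by
      calc (S *ᵥ w) ⬝ᵥ (S *ᵥ w) = w ⬝ᵥ ((Sᵀ * S) *ᵥ w) := dot_self_mulVec S w
        _ = c * (w ⬝ᵥ (S *ᵥ w)) := by rw [hSsymm, hS2, Matrix.smul_mulVec,
            dotProduct_smul, smul_eq_mul]
    have hswap : (S *ᵥ w) ⬝ᵥ w = w ⬝ᵥ (S *ᵥ w) := dotProduct_comm _ _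
    have hcalc : u ⬝ᵥ u = c * (c * (w ⬝ᵥ w) - w ⬝ᵥ (S *ᵥ w)) := by
      rw [hu]
      simp only [sub_dotProduct, dotProduct_sub, smul_dotProduct,
        dotProduct_smul, smul_eq_mul]
      rw [hSwSw, hswap]
      ring
    nlinarith [huu, hcalc, hcpos]
  -- bound : frobSq (X*W) ≤ p*c when WᵀW = 1
  have hbound : ∀ W : Matrix (Fin r) (Fin p) ℝ, Wᵀ * W = 1 →
      frobSq (X * W) ≤ p * c := by
    intro W hW
    have hcol : ∀ j : Fin p, (fun t => W t j) ⬝ᵥ (fun t => W t j) = 1 := by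
      intro j
      have := congrFun (congrFun hW j) j
      simpa [Matrix.mul_apply, Matrix.one_apply, dotProduct] using this
    have hXWcol : ∀ j : Fin p, (∑ i, (X * W) i j ^ 2)
        = (fun t => W t j) ⬝ᵥ (S *ᵥ (fun t => W t j)) := by
      intro j
      have : ∀ i, (X * W) i j = (X *ᵥ (fun t => W t j)) i := by
        intro i; simp [Matrix.mul_apply, Matrix.mulVec, dotProduct]
      calc ∑ i, (X * W) i j ^ 2
          = (X *ᵥ (fun t => W t j)) ⬝ᵥ (X *ᵥ (fun t => W t j)) := by
            simp only [dotProduct, this, sq]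
        _ = (fun t => W t j) ⬝ᵥ (S *ᵥ (fun t => W t j)) := by
            rw [dot_self_mulVec, ← hS_def]
    have : frobSq (X * W) = ∑ j, (fun t => W t j) ⬝ᵥ (S *ᵥ (fun t => W t j)) := by
      rw [frobSq, Finset.sum_comm]
      exact Finset.sum_congr rfl fun j _ => hXWcol j
    rw [this]
    calc ∑ j, (fun t => W t j) ⬝ᵥ (S *ᵥ (fun t => W t j))
        ≤ ∑ j : Fin p, c * ((fun t => W t j) ⬝ᵥ (fun t => W t j)) :=
          Finset.sum_le_sum fun j _ => hkey _
      _ = p * c := by simp [hcol, mul_comm]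
  constructor
  · -- membership: explicit W
    set W : Matrix (Fin r) (Fin p) ℝ := fun t j => X (Fin.castLE hp.le j) t / Real.sqrt c
      with hWdef
    have hW1 : Wᵀ * W = 1 := by
      ext j j'
      by_cases h : j = j'
      · subst h
        have hcj : ∑ t, X (Fin.castLE hp.le j) t ^ 2 = c := hrow _
        have hterm : ∀ t, (X (Fin.castLE hp.le j) t / Real.sqrt c)
            * (X (Fin.castLE hp.le j) t / Real.sqrt c)
            = X (Fin.castLE hp.le j) t ^ 2 / c := by
          intro t
          rw [div_mul_div_comm, ← sq, Real.mul_self_sqrt hcpos.le]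
        simp only [Matrix.mul_apply, Matrix.transpose_apply]
        simp only [hWdef, Matrix.mul_apply, Matrix.transpose_apply, Matrix.one_apply_eq, hterm,
          ← Finset.sum_div, hcj]
        exact div_self hc0
      · have hne : Fin.castLE hp.le j ≠ Fin.castLE hp.le j' :=
          fun hh => h (Fin.castLE_injective _ hh)
        have hterm : ∀ t, (X (Fin.castLE hp.le j) t / Real.sqrt c)
            * (X (Fin.castLE hp.le j') t / Real.sqrt c)
            = X (Fin.castLE hp.le j) t * X (Fin.castLE hp.le j') t / c := by
          intro t
          rw [div_mul_div_comm, Real.mul_self_sqrt hcpos.le]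
        simp only [Matrix.mul_apply, Matrix.transpose_apply]
        simp only [hWdef, Matrix.mul_apply, Matrix.transpose_apply, hterm,
          ← Finset.sum_div, horth _ _ hne, Matrix.one_apply_ne h, zero_div]
    refine ⟨W, hW1, ?_⟩
    have hentry : ∀ (i : Fin n) (j : Fin p),
        (X * W) i j = (if i = Fin.castLE hp.le j then Real.sqrt c else 0) := by
      intro i j
      have : (X * W) i j = (∑ t, X i t * X (Fin.castLE hp.le j) t) / Real.sqrt c := by
        simp only [Matrix.mul_apply]
        simp only [hWdef, Matrix.mul_apply]
        rw [Finset.sum_div]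
        exact Finset.sum_congr rfl fun t _ => (mul_div_assoc _ _ _).symm
      rw [this]
      by_cases h : i = Fin.castLE hp.le j
      · have hcj : ∑ t, X i t * X (Fin.castLE hp.le j) t = c := by
          rw [← h, ← hrow i]
          exact Finset.sum_congr rfl fun t _ => (sq (X i t)).symm
        rw [hcj, if_pos h, Real.div_sqrt]
      · rw [horth _ _ h, zero_div, if_neg h]
    have hXW : frobSq (X * W) = p * c := by
      rw [frobSq, Finset.sum_comm]
      have : ∀ j : Fin p, ∑ i, (X * W) i j ^ 2 = c := by
        intro j
        simp only [hentry]
        rw [Finset.sum_eq_single_of_mem (Fin.castLE hp.le j) (Finset.mem_univ _)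
          (fun b _ hb => by rw [if_neg hb, zero_pow two_ne_zero])]
        rw [if_pos rfl, Real.sq_sqrt hcpos.le]
      rw [Finset.sum_congr rfl fun j _ => this j]
      simp [mul_comm]
    rw [hformula W hW1, hXW, hval]
  · -- lower bound
    rintro e ⟨W, hW, rfl⟩
    rw [hformula W hW, hval]
    have := hbound W hW
    linarith
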